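/- arXiv:2510.14912 — 2 statements merged into one kernel-verified Lean document; each statement's English description precedes it below -/
import Mathlib

section
/- Define the swapping fidelity F_s(F₁, F₂) = F₁·F₂ + (1/3)(1−F₁)(1−F₂). If 1/4 ≤ F₁ ≤ 1 and 1/4 ≤ F₂ ≤ 1, then F_s(F₁, F₂) ≤ min(F₁, F₂); i.e., swapping never increases fidelity beyond either input. Moreover, if in addition F₁ < 1 and F₂ > 1/4, then F_s(F₁, F₂) < F₂, so the swapping process causes strict fidelity loss. -/
/-- Swapping never increases fidelity beyond either input: if `1/4 ≤ F₁ ≤ 1` and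
`1/4 ≤ F₂ ≤ 1`, then `F_s(F₁, F₂) ≤ min F₁ F₂`; moreover if in addition `F₁ < 1` and
`F₂ > 1/4`, then `F_s(F₁, F₂) < F₂` strictly. -/
theorem swapping_fidelity_loss
    (Fs : ℝ → ℝ → ℝ)
    (hFs : ∀ F₁ F₂ : ℝ, Fs F₁ F₂ = F₁ * F₂ + (1 / 3) * (1 - F₁) * (1 - F₂)) :
    ∀ F₁ F₂ : ℝ, 1 / 4 ≤ F₁ → F₁ ≤ 1 → 1 / 4 ≤ F₂ → F₂ ≤ 1 →
      Fs F₁ F₂ ≤ min F₁ F₂ ∧ (F₁ < 1 → 1 / 4 < F₂ → Fs F₁ F₂ < F₂) := by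
  intro F₁ F₂ h1 h2 h3 h4
  rw [hFs]
  refine ⟨le_min ?_ ?_, fun h5 h6 => ?_⟩ <;> nlinarith [mul_nonneg (sub_nonneg.2 h2) (sub_nonneg.2 h4)]
end

section
/- Let A, B, 𝒯, κ be real numbers with 1/4 ≤ A, B > 0, A + B ≤ 1, 𝒯 > 0, and κ > 0. Define F_d(t) = A + B·exp(−(t/𝒯)^κ), g(F) = 𝒯·(log(B/(F−A)))^(1/κ), the decay map D_τ(F) = F_d(g(F) + τ), and the swapping fidelity F_s(F₁, F₂) = F₁·F₂ + (1/3)(1−F₁)(1−F₂). Then for every τ ≥ 0 and all F₁, F₂ with A < F₁ ≤ A + B and A < F₂ ≤ A + B, one has F_s(D_τ(F₁), D_τ(F₂)) ≤ F_s(F₁, F₂); i.e., letting both pairs decohere for time τ before swapping (Eq. (5) of the paper, F^τ_s(F₁,F₂) = F_s(F^τ(F₁), F^τ(F₂))) yields fidelity no larger than swapping them immediately. -/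
/-- Letting both pairs decohere for time `τ ≥ 0` before swapping yields fidelity no larger
than swapping them immediately: `F_s(D_τ(F₁), D_τ(F₂)) ≤ F_s(F₁, F₂)` for
`F₁, F₂ ∈ (A, A+B]`, under the physical parameter constraints `1/4 ≤ A`, `A + B ≤ 1`. -/
theorem decohere_then_swap_le_swap
    (A B 𝒯 κ : ℝ) (hA : 1 / 4 ≤ A) (hB : 0 < B) (hAB : A + B ≤ 1)
    (h𝒯 : 0 < 𝒯) (hκ : 0 < κ)
    (Fd g : ℝ → ℝ) (D : ℝ → ℝ → ℝ) (Fs : ℝ → ℝ → ℝ)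
    (hFd : ∀ t : ℝ, Fd t = A + B * Real.exp (-((t / 𝒯) ^ κ)))
    (hg : ∀ F : ℝ, g F = 𝒯 * (Real.log (B / (F - A))) ^ (1 / κ))
    (hD : ∀ τ F : ℝ, D τ F = Fd (g F + τ))
    (hFs : ∀ F₁ F₂ : ℝ, Fs F₁ F₂ = F₁ * F₂ + (1 / 3) * (1 - F₁) * (1 - F₂)) :
    ∀ τ F₁ F₂ : ℝ, 0 ≤ τ → A < F₁ → F₁ ≤ A + B → A < F₂ → F₂ ≤ A + B →
      Fs (D τ F₁) (D τ F₂) ≤ Fs F₁ F₂ := by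
  intro τ F₁ F₂ hτ h1l h1u h2l h2u
  have key : ∀ F, A < F → F ≤ A + B → A < D τ F ∧ D τ F ≤ F := by
    intro F hl hu
    have hFA : 0 < F - A := by linarith
    have hle : F - A ≤ B := by linarith
    have hx : (1:ℝ) ≤ B / (F - A) := (one_le_div hFA).mpr hle
    have hxpos : (0:ℝ) < B / (F - A) := by positivity
    have hlog : 0 ≤ Real.log (B / (F - A)) := Real.log_nonneg hx
    have hgF : 0 ≤ g F := by
      rw [hg]; positivity
    have hFdgF : Fd (g F) = F := by
      rw [hFd, hg]
      have h1 : 𝒯 * Real.log (B / (F - A)) ^ (1 / κ) / 𝒯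
          = Real.log (B / (F - A)) ^ (1 / κ) := by
        field_simp
      rw [h1, ← Real.rpow_mul hlog, one_div_mul_cancel hκ.ne', Real.rpow_one,
        Real.exp_neg, Real.exp_log hxpos]
      field_simp
      ring
    constructor
    · rw [hD, hFd]
      have : 0 < B * Real.exp (-((g F + τ) / 𝒯) ^ κ) := by positivity
      linarith
    · have hmono : Fd (g F + τ) ≤ Fd (g F) := by
        rw [hFd, hFd]
        have h0 : 0 ≤ g F / 𝒯 := by positivity
        have hdiv : g F / 𝒯 ≤ (g F + τ) / 𝒯 := by gcongr; linarith
        have hr : (g F / 𝒯) ^ κ ≤ ((g F + τ) / 𝒯) ^ κ :=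
          Real.rpow_le_rpow h0 hdiv hκ.le
        have := Real.exp_le_exp.mpr (neg_le_neg hr)
        nlinarith [this]
      rw [hD]; rw [hFdgF] at hmono; exact hmono
  obtain ⟨hD1l, hD1u⟩ := key F₁ h1l h1u
  obtain ⟨hD2l, hD2u⟩ := key F₂ h2l h2u
  rw [hFs, hFs]
  nlinarith [mul_nonneg (sub_nonneg.mpr hD1u) (by linarith : (0:ℝ) ≤ 4 * D τ F₂ - 1),
    mul_nonneg (sub_nonneg.mpr hD2u) (by linarith : (0:ℝ) ≤ 4 * F₁ - 1)]
end
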